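/- Let φ_AB = |φ⟩⟨φ| be a pure density matrix on ℂ^{d_A} ⊗ ℂ^{d_B}, with reduced state ρ_B = Tr_A[φ_AB], and let γ_B be a positive definite density matrix on ℂ^{d_B}. Then J→(φ_AB) = S(ρ_B), and consequently the work of assistance satisfies β·W_a(φ_AB) = S(ρ_B ‖ γ_B) + S(ρ_B) for every β > 0. -/

import Mathlib

open Matrix BigOperators
open scoped Kronecker ComplexOrder

noncomputable section

namespace AWD

/-- Matrix logarithm via the spectral decomposition, with the convention `log 0 = 0`
(`Real.log 0 = 0` in Mathlib); junk value `0` on non-Hermitian matrices. -/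
noncomputable def matLog {n : Type*} [Fintype n] [DecidableEq n] (A : Matrix n n ℂ) :
    Matrix n n ℂ :=
  if hA : A.IsHermitian then
    (hA.eigenvectorUnitary : Matrix n n ℂ) *
      Matrix.diagonal (fun i => (Real.log (hA.eigenvalues i) : ℂ)) *
      (star (hA.eigenvectorUnitary : Matrix n n ℂ))
  else 0

/-- von Neumann entropy `S(ρ) = −Tr[ρ log ρ]`. -/
noncomputable def vN {n : Type*} [Fintype n] [DecidableEq n] (ρ : Matrix n n ℂ) : ℝ :=
  - ((ρ * matLog ρ).trace).re

/-- Quantum relative entropy `S(ρ‖σ) = Tr[ρ log ρ] − Tr[ρ log σ]`. -/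
noncomputable def relEnt {n : Type*} [Fintype n] [DecidableEq n] (ρ σ : Matrix n n ℂ) : ℝ :=
  ((ρ * matLog ρ).trace).re - ((ρ * matLog σ).trace).re

/-- A density matrix: positive semidefinite with unit trace. -/
def IsDensityMatrix {n : Type*} [Fintype n] (ρ : Matrix n n ℂ) : Prop :=
  ρ.PosSemidef ∧ ρ.trace = 1

/-- Partial trace over the first (Alice's) tensor factor. -/
def ptraceA {a b : Type*} [Fintype a] (X : Matrix (a × b) (a × b) ℂ) : Matrix b b ℂ :=
  fun y y' => ∑ x : a, X (x, y) (x, y')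

/-- Partial trace over the second (Bob's) tensor factor. -/
def ptraceB {a b : Type*} [Fintype b] (X : Matrix (a × b) (a × b) ℂ) : Matrix a a ℂ :=
  fun x x' => ∑ y : b, X (x, y) (x', y)

/-- A POVM indexed by `ι` on system `a`. -/
structure POVM (ι a : Type*) [Fintype ι] [Fintype a] [DecidableEq a] where
  elem : ι → Matrix a a ℂ
  pos : ∀ i, (elem i).PosSemidef
  sum_eq : ∑ i, elem i = 1

variable {ι a b : Type*} [Fintype ι] [Fintype a] [DecidableEq a] [Fintype b] [DecidableEq b]

/-- Probability `p_i = Tr[(Π_i ⊗ I) ρ_AB]` of outcome `i`. -/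
noncomputable def povmProb (P : POVM ι a) (ρ : Matrix (a × b) (a × b) ℂ) (i : ι) : ℝ :=
  (((P.elem i ⊗ₖ (1 : Matrix b b ℂ)) * ρ).trace).re

/-- Post-measurement state `ρ̃_i = Tr_A[(Π_i ⊗ I) ρ_AB] / p_i` on Bob's side. -/
noncomputable def povmPost (P : POVM ι a) (ρ : Matrix (a × b) (a × b) ℂ) (i : ι) :
    Matrix b b ℂ :=
  (povmProb P ρ i)⁻¹ • ptraceA ((P.elem i ⊗ₖ (1 : Matrix b b ℂ)) * ρ)

/-- `Σ_{i : p_i > 0} p_i S(ρ̃_i‖γ_B)`. -/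
noncomputable def workSum (P : POVM ι a) (ρ : Matrix (a × b) (a × b) ℂ)
    (γB : Matrix b b ℂ) : ℝ :=
  ∑ i, if 0 < povmProb P ρ i then povmProb P ρ i * relEnt (povmPost P ρ i) γB else 0

/-- The work of assistance, a supremum over all POVMs on Alice's side. -/
noncomputable def Wa (ρ : Matrix (a × b) (a × b) ℂ) (γB : Matrix b b ℂ) (β : ℝ) : ℝ :=
  ⨆ (k : ℕ), ⨆ (P : POVM (Fin k) a), (1 / β) * workSum P ρ γB

/-- The Henderson–Vedral measure of classical correlations
`J→(ρ_AB) = sup_{POVM} [S(ρ_B) − Σ_{i : p_i>0} p_i S(ρ̃_i)]`. -/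
noncomputable def Jarrow (ρ : Matrix (a × b) (a × b) ℂ) : ℝ :=
  ⨆ (k : ℕ), ⨆ (P : POVM (Fin k) a),
    (vN (ptraceA ρ) -
      ∑ i, if 0 < povmProb P ρ i then povmProb P ρ i * vN (povmPost P ρ i) else 0)


/-! ### Auxiliary lemmas -/

section Aux

variable {n : Type*} [Fintype n] [DecidableEq n]

lemma trace_conj_unitary (U D : Matrix n n ℂ) (hU : star U * U = 1) :
    (U * D * star U).trace = D.trace := by
  rw [trace_mul_cycle, hU, one_mul]

lemma conj_mul_conj (U C D : Matrix n n ℂ) (hU : star U * U = 1) :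
    (U * C * star U) * (U * D * star U) = U * (C * D) * star U := by
  rw [show (U * C * star U) * (U * D * star U) = U * C * (star U * U) * (D * star U) by
    simp only [Matrix.mul_assoc], hU, Matrix.mul_one]
  simp only [Matrix.mul_assoc]

lemma matLog_eq {A : Matrix n n ℂ} (hA : A.IsHermitian) :
    matLog A = (hA.eigenvectorUnitary : Matrix n n ℂ) *
      Matrix.diagonal (fun i => (Real.log (hA.eigenvalues i) : ℂ)) *
      (star (hA.eigenvectorUnitary : Matrix n n ℂ)) := dif_pos hA

lemma mul_matLog_self {A : Matrix n n ℂ} (hA : A.IsHermitian) :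
    A * matLog A = (hA.eigenvectorUnitary : Matrix n n ℂ) *
      Matrix.diagonal (fun i => (hA.eigenvalues i : ℂ) * Real.log (hA.eigenvalues i)) *
      (star (hA.eigenvectorUnitary : Matrix n n ℂ)) := by
  conv_lhs => rw [matLog_eq hA]
  conv_lhs => lhs; rw [hA.spectral_theorem, Unitary.conjStarAlgAut_apply]
  rw [conj_mul_conj _ _ _ (Unitary.coe_star_mul_self _), diagonal_mul_diagonal]
  rfl

lemma trace_mul_matLog_self_re {A : Matrix n n ℂ} (hA : A.IsHermitian) :
    ((A * matLog A).trace).re = ∑ i, hA.eigenvalues i * Real.log (hA.eigenvalues i) := by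
  rw [mul_matLog_self hA, trace_conj_unitary _ _ (Unitary.coe_star_mul_self _),
    trace_diagonal]
  simp

lemma trace_eq_sum_eigen {A : Matrix n n ℂ} (hA : A.IsHermitian) :
    A.trace = ∑ i, (hA.eigenvalues i : ℂ) := by
  conv_lhs => rw [hA.spectral_theorem, Unitary.conjStarAlgAut_apply]
  rw [trace_conj_unitary _ _ (Unitary.coe_star_mul_self _), trace_diagonal]
  rfl

lemma star_mul_self_re_eq (z : ℂ) : (star z * z).re = Complex.normSq z := by
  rw [Complex.star_def, ← Complex.normSq_eq_conj_mul_self, Complex.ofReal_re]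

omit [DecidableEq n] in
lemma psd_trace_re_nonneg {M : Matrix n n ℂ} (hM : M.PosSemidef) : 0 ≤ M.trace.re := by
  classical
  open scoped MatrixOrder Matrix.Norms.L2Operator in
  obtain ⟨μ, hμ⟩ := CStarAlgebra.nonneg_iff_eq_star_mul_self.mp hM.nonneg
  rw [Matrix.star_eq_conjTranspose] at hμ
  subst hμ
  rw [Matrix.trace]
  simp only [Complex.re_sum, Matrix.diag_apply, Matrix.mul_apply, Matrix.conjTranspose_apply]
  refine Finset.sum_nonneg fun i _ => Finset.sum_nonneg fun j _ => ?_
  rw [star_mul_self_re_eq]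
  exact Complex.normSq_nonneg _

lemma psd_trace_ofReal {M : Matrix n n ℂ} (hM : M.PosSemidef) :
    M.trace = (M.trace.re : ℂ) := by
  rw [trace_eq_sum_eigen hM.isHermitian]
  simp

omit [DecidableEq n] in
lemma psd_trace_eq_zero {M : Matrix n n ℂ} (hM : M.PosSemidef) (h : M.trace.re = 0) :
    M = 0 := by
  classical
  open scoped MatrixOrder Matrix.Norms.L2Operator in
  obtain ⟨μ, hμ⟩ := CStarAlgebra.nonneg_iff_eq_star_mul_self.mp hM.nonneg
  rw [Matrix.star_eq_conjTranspose] at hμ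
  subst hμ
  have hsum : (μᴴ * μ).trace.re = ∑ i, ∑ j, Complex.normSq (μ j i) := by
    rw [Matrix.trace]
    simp only [Complex.re_sum, Matrix.diag_apply, Matrix.mul_apply, Matrix.conjTranspose_apply]
    exact Finset.sum_congr rfl fun i _ => Finset.sum_congr rfl fun j _ => star_mul_self_re_eq _
  rw [hsum] at h
  have hz : ∀ j i, μ j i = 0 := by
    intro j i
    have h1 := (Finset.sum_eq_zero_iff_of_nonneg (fun i _ => Finset.sum_nonneg
      (fun j _ => Complex.normSq_nonneg _))).mp h i (Finset.mem_univ i)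
    have h2 := (Finset.sum_eq_zero_iff_of_nonneg (fun j _ => Complex.normSq_nonneg _)).mp h1 j
      (Finset.mem_univ j)
    exact Complex.normSq_eq_zero.mp h2
  have : μ = 0 := by ext j i; exact hz j i
  rw [this]
  simp

lemma vN_nonneg {ρ : Matrix n n ℂ} (hρ : ρ.PosSemidef) (h1 : ρ.trace = 1) : 0 ≤ vN ρ := by
  have hH := hρ.isHermitian
  have hsum : ∑ i, hH.eigenvalues i = 1 := by
    have := trace_eq_sum_eigen hH
    rw [h1] at this
    exact_mod_cast this.symm
  rw [vN, trace_mul_matLog_self_re hH, neg_nonneg]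
  refine Finset.sum_nonpos fun i _ => ?_
  have hnn := hρ.eigenvalues_nonneg i
  have hle : hH.eigenvalues i ≤ 1 := by
    rw [← hsum]
    exact Finset.single_le_sum (fun j _ => hρ.eigenvalues_nonneg j) (Finset.mem_univ i)
  exact mul_nonpos_of_nonneg_of_nonpos hnn (Real.log_nonpos hnn hle)

lemma matLog_of_proj {M : Matrix n n ℂ} (hH : M.IsHermitian) (hMM : M * M = M) :
    matLog M = 0 := by
  set U : Matrix n n ℂ := (hH.eigenvectorUnitary : Matrix n n ℂ) with hUdef
  have hU : star U * U = 1 := Unitary.coe_star_mul_self _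
  have hU' : U * star U = 1 := Unitary.coe_mul_star_self _
  have key : (star U * M * U) * (star U * M * U) = star U * M * U := by
    rw [show (star U * M * U) * (star U * M * U) = star U * (M * (U * star U) * M) * U by
      simp only [Matrix.mul_assoc], hU', Matrix.mul_one, hMM]
  have hdiag : star U * M * U = diagonal (RCLike.ofReal ∘ hH.eigenvalues) := by
    conv_lhs => rw [hH.spectral_theorem, Unitary.conjStarAlgAut_apply, ← hUdef]
    rw [show star U * (U * diagonal (RCLike.ofReal ∘ hH.eigenvalues) * star U) * U =
      (star U * U) * diagonal (RCLike.ofReal ∘ hH.eigenvalues) * (star U * U) by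
        simp only [Matrix.mul_assoc], hU, Matrix.one_mul, Matrix.mul_one]
  rw [hdiag, diagonal_mul_diagonal] at key
  have hev : ∀ i, hH.eigenvalues i = 0 ∨ hH.eigenvalues i = 1 := by
    intro i
    have h3 := congrFun (congrFun key i) i
    simp only [Matrix.diagonal_apply_eq, Function.comp_apply] at h3
    have h4 : hH.eigenvalues i * hH.eigenvalues i = hH.eigenvalues i := by exact_mod_cast h3
    rcases mul_self_eq_zero.mp (by nlinarith [h4] : (hH.eigenvalues i - 1) *
      (hH.eigenvalues i) * ((hH.eigenvalues i - 1) * (hH.eigenvalues i)) = 0) with h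
    rcases mul_eq_zero.mp h with h | h
    · right; linarith
    · left; exact h
  rw [matLog_eq hH]
  have : (fun i => (Real.log (hH.eigenvalues i) : ℂ)) = fun _ => 0 := by
    funext i
    rcases hev i with h | h <;> simp [h]
  rw [this]
  simp

lemma vN_of_proj {M : Matrix n n ℂ} (hH : M.IsHermitian) (hMM : M * M = M) : vN M = 0 := by
  rw [vN, matLog_of_proj hH hMM]
  simp

lemma psd_diag_re_nonneg {M : Matrix n n ℂ} (hM : M.PosSemidef) (j : n) :
    0 ≤ (M j j).re := by
  have h := hM.dotProduct_mulVec_nonneg (Pi.single j 1)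
  have : star (Pi.single j 1 : n → ℂ) ⬝ᵥ M *ᵥ Pi.single j 1 = M j j := by
    simp [Matrix.mulVec_single, dotProduct, Pi.single_apply, Finset.sum_ite_eq]
  rw [this] at h
  exact (Complex.le_def.mp h).1

lemma posSemidef_real_smul {M : Matrix n n ℂ} (hM : M.PosSemidef) {r : ℝ} (hr : 0 ≤ r) :
    (r • M).PosSemidef := by
  refine Matrix.PosSemidef.of_dotProduct_mulVec_nonneg ?_ ?_
  · have h1 := hM.isHermitian
    ext i j
    simp only [Matrix.conjTranspose_apply, Matrix.smul_apply, star_smul, star_trivial]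
    rw [← Matrix.conjTranspose_apply, h1]
  · intro x
    rw [Matrix.smul_mulVec, dotProduct_smul]
    have h0 := hM.dotProduct_mulVec_nonneg x
    have h1 := (Complex.le_def.mp h0).1
    have h2 := (Complex.le_def.mp h0).2
    rw [Complex.le_def]
    constructor
    · simp only [Complex.smul_re, Complex.zero_re]
      exact mul_nonneg hr (by simpa using h1)
    · simp only [Complex.smul_im, Complex.zero_im]
      rw [← h2]
      simp

/-- Trace pairing: `Re Tr[A · log γ] ≤ 0` for `A` PSD and `γ` a positive definite state. -/
lemma trace_mul_matLog_re_nonpos {A γ : Matrix n n ℂ} (hA : A.PosSemidef) (hγ : γ.PosDef)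
    (hγ1 : γ.trace = 1) : ((A * matLog γ).trace).re ≤ 0 := by
  have hH := hγ.isHermitian
  rw [matLog_eq hH]
  set U : Matrix n n ℂ := (hH.eigenvectorUnitary : Matrix n n ℂ) with hUdef
  have hU : star U * U = 1 := Unitary.coe_star_mul_self _
  have hU' : U * star U = 1 := Unitary.coe_mul_star_self _
  have h1 : ∀ D : Matrix n n ℂ, A * (U * D * star U) = U * ((star U * A * U) * D) * star U :=
    fun D => by
    rw [show U * ((star U * A * U) * D) * star U =
      (U * star U) * (A * (U * D * star U)) by simp only [Matrix.mul_assoc], hU', Matrix.one_mul]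
  rw [h1, trace_conj_unitary _ _ hU]
  have hM : (star U * A * U).PosSemidef := by
    have := hA.conjTranspose_mul_mul_same U
    rwa [← Matrix.star_eq_conjTranspose] at this
  have hsum : ∑ i, hH.eigenvalues i = 1 := by
    have := trace_eq_sum_eigen hH
    rw [hγ1] at this
    exact_mod_cast this.symm
  rw [Matrix.trace]
  simp only [Matrix.diag_apply, Matrix.mul_diagonal, Complex.re_sum]
  refine Finset.sum_nonpos fun j _ => ?_
  rw [mul_comm, Complex.re_ofReal_mul]
  have hpos := hγ.eigenvalues_pos j
  have hle : hH.eigenvalues j ≤ 1 := by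
    rw [← hsum]
    exact Finset.single_le_sum (fun i _ => (hγ.eigenvalues_pos i).le) (Finset.mem_univ j)
  exact mul_nonpos_iff.mpr (Or.inr ⟨Real.log_nonpos hpos.le hle, psd_diag_re_nonneg hM j⟩)

end Aux


section Aux2

variable {ι a b : Type*} [Fintype ι] [Fintype a] [DecidableEq a] [Fintype b] [DecidableEq b]

/-- `φ` viewed as a `dA × dB` matrix. -/
def Wm (φ : a × b → ℂ) : Matrix a b ℂ := Matrix.of fun x y => φ (x, y)

lemma key_ptrace (P : Matrix a a ℂ) (φ : a × b → ℂ) :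
    ptraceA ((P ⊗ₖ (1 : Matrix b b ℂ)) * Matrix.vecMulVec φ (star φ)) =
      ((Wm φ)ᴴ * P * (Wm φ))ᵀ := by
  funext y y'
  simp only [ptraceA, Matrix.transpose_apply, Matrix.mul_apply, Matrix.conjTranspose_apply,
    Matrix.vecMulVec_apply, Matrix.kroneckerMap_apply, Matrix.one_apply, Wm, Matrix.of_apply,
    Pi.star_apply, Fintype.sum_prod_type, mul_ite, mul_zero, ite_mul, zero_mul, mul_one,
    Finset.sum_ite_eq, Finset.mem_univ, if_true]
  rw [Finset.sum_comm]
  refine Finset.sum_congr rfl fun x' _ => ?_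
  rw [Finset.sum_mul]
  refine Finset.sum_congr rfl fun x _ => ?_
  ring

lemma trace_ptraceA (X : Matrix (a × b) (a × b) ℂ) : (ptraceA X).trace = X.trace := by
  rw [Matrix.trace, Matrix.trace]
  simp only [Matrix.diag_apply, ptraceA, Fintype.sum_prod_type]
  exact Finset.sum_comm

lemma povmProb_eq (P : POVM ι a) (ρ : Matrix (a × b) (a × b) ℂ) (i : ι) :
    povmProb P ρ i = ((ptraceA ((P.elem i ⊗ₖ (1 : Matrix b b ℂ)) * ρ)).trace).re := by
  rw [povmProb, trace_ptraceA]

lemma post_psd_aux (P : POVM ι a) (φ : a × b → ℂ) (i : ι) :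
    (ptraceA ((P.elem i ⊗ₖ (1 : Matrix b b ℂ)) * Matrix.vecMulVec φ (star φ))).PosSemidef := by
  rw [key_ptrace]
  exact ((P.pos i).conjTranspose_mul_mul_same _).transpose

lemma prob_nonneg (P : POVM ι a) (φ : a × b → ℂ) (i : ι) :
    0 ≤ povmProb P (Matrix.vecMulVec φ (star φ)) i := by
  rw [povmProb_eq]
  exact psd_trace_re_nonneg (post_psd_aux P φ i)

lemma ptrace_eq_zero_of_prob (P : POVM ι a) (φ : a × b → ℂ) (i : ι)
    (hp : ¬ 0 < povmProb P (Matrix.vecMulVec φ (star φ)) i) :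
    ptraceA ((P.elem i ⊗ₖ (1 : Matrix b b ℂ)) * Matrix.vecMulVec φ (star φ)) = 0 := by
  have h0 : povmProb P (Matrix.vecMulVec φ (star φ)) i = 0 :=
    le_antisymm (not_lt.mp hp) (prob_nonneg P φ i)
  exact psd_trace_eq_zero (post_psd_aux P φ i) (by rw [← povmProb_eq]; exact h0)

lemma post_psd (P : POVM ι a) (φ : a × b → ℂ) (i : ι)
    (hp : 0 < povmProb P (Matrix.vecMulVec φ (star φ)) i) :
    (povmPost P (Matrix.vecMulVec φ (star φ)) i).PosSemidef :=
  posSemidef_real_smul (post_psd_aux P φ i) (inv_nonneg.mpr hp.le)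

lemma post_trace_one (P : POVM ι a) (φ : a × b → ℂ) (i : ι)
    (hp : 0 < povmProb P (Matrix.vecMulVec φ (star φ)) i) :
    (povmPost P (Matrix.vecMulVec φ (star φ)) i).trace = 1 := by
  rw [povmPost, Matrix.trace_smul, psd_trace_ofReal (post_psd_aux P φ i), ← povmProb_eq,
    Complex.real_smul]
  rw [← Complex.ofReal_mul, inv_mul_cancel₀ hp.ne', Complex.ofReal_one]

lemma sum_ptraces (P : POVM ι a) (φ : a × b → ℂ) :
    ∑ i, ptraceA ((P.elem i ⊗ₖ (1 : Matrix b b ℂ)) * Matrix.vecMulVec φ (star φ)) =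
      ptraceA (Matrix.vecMulVec φ (star φ)) := by
  have h2 : ptraceA (Matrix.vecMulVec φ (star φ)) =
      ((Wm φ)ᴴ * (1 : Matrix a a ℂ) * (Wm φ))ᵀ := by
    have h3 := key_ptrace (1 : Matrix a a ℂ) φ
    rw [Matrix.one_kronecker_one, Matrix.one_mul] at h3
    exact h3
  simp only [key_ptrace]
  rw [h2, ← Matrix.transpose_sum]
  congr 1
  rw [← Matrix.sum_mul, ← Matrix.mul_sum, P.sum_eq]

lemma weighted_sum (P : POVM ι a) (φ : a × b → ℂ) (L : Matrix b b ℂ) :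
    (∑ i, if 0 < povmProb P (Matrix.vecMulVec φ (star φ)) i then
        povmProb P (Matrix.vecMulVec φ (star φ)) i *
          ((povmPost P (Matrix.vecMulVec φ (star φ)) i * L).trace).re
      else 0)
      = ((ptraceA (Matrix.vecMulVec φ (star φ)) * L).trace).re := by
  have key : ∀ i, (if 0 < povmProb P (Matrix.vecMulVec φ (star φ)) i then
      povmProb P (Matrix.vecMulVec φ (star φ)) i *
        ((povmPost P (Matrix.vecMulVec φ (star φ)) i * L).trace).re else 0)
      = ((ptraceA ((P.elem i ⊗ₖ (1 : Matrix b b ℂ)) * Matrix.vecMulVec φ (star φ)) * L).trace).re := by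
    intro i
    by_cases hp : 0 < povmProb P (Matrix.vecMulVec φ (star φ)) i
    · rw [if_pos hp, povmPost, Matrix.smul_mul, Matrix.trace_smul, Complex.real_smul,
        Complex.re_ofReal_mul, ← mul_assoc, mul_inv_cancel₀ hp.ne', one_mul]
    · rw [if_neg hp, ptrace_eq_zero_of_prob P φ i hp, Matrix.zero_mul, Matrix.trace_zero]
      simp
  rw [Finset.sum_congr rfl fun i _ => key i, ← Complex.re_sum, ← Matrix.trace_sum,
    ← Finset.sum_mul, sum_ptraces]

lemma trace_vecMulVec_star (ψ : b → ℂ) :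
    (Matrix.vecMulVec ψ (star ψ)).trace = ((∑ y, Complex.normSq (ψ y) : ℝ) : ℂ) := by
  rw [Matrix.trace]
  push_cast
  refine Finset.sum_congr rfl fun y _ => ?_
  simp only [Matrix.diag_apply, Matrix.vecMulVec_apply, Pi.star_apply]
  rw [Complex.star_def, Complex.mul_conj]

lemma herm_smul_vecMulVec (ψ : b → ℂ) (p : ℝ) :
    (p⁻¹ • Matrix.vecMulVec ψ (star ψ)).IsHermitian := by
  ext i j
  simp only [Matrix.conjTranspose_apply, Matrix.smul_apply, Matrix.vecMulVec_apply,
    Pi.star_apply, star_smul, star_trivial, star_mul', star_star]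
  ring_nf

lemma proj_smul_vecMulVec {ψ : b → ℂ} {p : ℝ} (hp : p ≠ 0)
    (hsum : (∑ y, Complex.normSq (ψ y)) = p) :
    (p⁻¹ • Matrix.vecMulVec ψ (star ψ)) * (p⁻¹ • Matrix.vecMulVec ψ (star ψ))
      = p⁻¹ • Matrix.vecMulVec ψ (star ψ) := by
  have hpc : (p : ℂ) ≠ 0 := by exact_mod_cast hp
  ext q r
  simp only [Matrix.mul_apply, Matrix.smul_apply, Matrix.vecMulVec_apply, Pi.star_apply,
    Complex.real_smul, Complex.ofReal_inv]
  have h1 : ∀ s, ((↑p)⁻¹ * (ψ q * star (ψ s))) * ((↑p)⁻¹ * (ψ s * star (ψ r)))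
      = (((p : ℂ))⁻¹ * (↑p)⁻¹ * (ψ q * star (ψ r))) * (star (ψ s) * ψ s) := fun s => by ring
  rw [Finset.sum_congr rfl fun s _ => h1 s, ← Finset.mul_sum]
  have h2 : ∑ s, star (ψ s) * ψ s = ((p : ℝ) : ℂ) := by
    rw [← hsum]
    push_cast
    refine Finset.sum_congr rfl fun s _ => ?_
    rw [Complex.star_def, ← Complex.normSq_eq_conj_mul_self]
  rw [h2]
  field_simp

/-- The standard-basis projective measurement. -/
def stdPOVM (d : ℕ) : POVM (Fin d) (Fin d) where
  elem i := Matrix.diagonal (fun x => if x = i then (1 : ℂ) else 0)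
  pos i := Matrix.posSemidef_diagonal_iff.mpr fun x => by split <;> simp
  sum_eq := by
    ext x y
    rw [Matrix.sum_apply]
    by_cases h : x = y
    · subst h
      simp [Matrix.diagonal_apply_eq, Finset.sum_ite_eq, Matrix.one_apply_eq]
    · simp [Matrix.diagonal_apply_ne _ h, Matrix.one_apply_ne h]

lemma stdPOVM_ptrace {d : ℕ} (φ : Fin d × b → ℂ) (i : Fin d) :
    ptraceA (((stdPOVM d).elem i ⊗ₖ (1 : Matrix b b ℂ)) * Matrix.vecMulVec φ (star φ)) =
      Matrix.vecMulVec (fun y => φ (i, y)) (star fun y => φ (i, y)) := by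
  rw [key_ptrace]
  ext y y'
  simp only [stdPOVM, Matrix.transpose_apply, Matrix.mul_apply, Matrix.conjTranspose_apply,
    Matrix.diagonal_apply, Wm, Matrix.of_apply, Matrix.vecMulVec_apply, Pi.star_apply,
    mul_ite, mul_zero, ite_mul, zero_mul, mul_one]
  simp only [Finset.sum_ite_eq', Finset.mem_univ, if_true, ite_mul, zero_mul]
  exact mul_comm _ _

/-- Helper for the nested supremum over POVMs. -/
lemma iSup_iSup_eq {α : Type*} [Fintype α] [DecidableEq α] {F : (k : ℕ) → POVM (Fin k) α → ℝ}
    {T : ℝ} (hT : 0 ≤ T) (hub : ∀ k P, F k P ≤ T) (hex : ∃ k P, F k P = T) :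
    (⨆ k, ⨆ P, F k P) = T := by
  have hbdd : ∀ k, BddAbove (Set.range (F k)) := fun k => ⟨T, by rintro _ ⟨P, rfl⟩; exact hub k P⟩
  have hinner_le : ∀ k, (⨆ P, F k P) ≤ T := fun k => Real.iSup_le (hub k) hT
  apply le_antisymm
  · exact Real.iSup_le hinner_le hT
  · obtain ⟨k, P, hP⟩ := hex
    calc T = F k P := hP.symm
    _ ≤ ⨆ P, F k P := le_ciSup (hbdd k) P
    _ ≤ ⨆ k, ⨆ P, F k P := le_ciSup ⟨T, by rintro _ ⟨k', rfl⟩; exact hinner_le k'⟩ k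

end Aux2


/-- for a pure state `φ_AB = |φ⟩⟨φ|`, the Henderson–Vedral measure equals the
local entropy, `J→(φ_AB) = S(ρ_B)`, and consequently
`β·W_a(φ_AB) = S(ρ_B‖γ_B) + S(ρ_B)` for every `β > 0`. -/
theorem assisted_work_distillation_stmt15 {dA dB : ℕ}
    (φ : Fin dA × Fin dB → ℂ) (hφ : ∑ x, Complex.normSq (φ x) = 1)
    (φAB : Matrix (Fin dA × Fin dB) (Fin dA × Fin dB) ℂ)
    (hφAB : φAB = Matrix.vecMulVec φ (star φ))
    (γB : Matrix (Fin dB) (Fin dB) ℂ) (hγB : IsDensityMatrix γB) (hγBpd : γB.PosDef)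
    (β : ℝ) (hβ : 0 < β) :
    Jarrow φAB = vN (ptraceA φAB) ∧
      β * Wa φAB γB β = relEnt (ptraceA φAB) γB + vN (ptraceA φAB) := by
  subst hφAB
  have hρB_psd : (ptraceA (Matrix.vecMulVec φ (star φ))).PosSemidef := by
    have h3 := key_ptrace (1 : Matrix (Fin dA) (Fin dA) ℂ) φ
    rw [Matrix.one_kronecker_one, Matrix.one_mul] at h3
    rw [h3]
    exact (Matrix.PosSemidef.one.conjTranspose_mul_mul_same _).transpose
  have hρB_tr : (ptraceA (Matrix.vecMulVec φ (star φ))).trace = 1 := by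
    rw [trace_ptraceA, trace_vecMulVec_star φ, hφ, Complex.ofReal_one]
  have hS0 : 0 ≤ vN (ptraceA (Matrix.vecMulVec φ (star φ))) := vN_nonneg hρB_psd hρB_tr
  have h_eS_nonneg : ∀ (k : ℕ) (P : POVM (Fin k) (Fin dA)),
      0 ≤ ∑ i, if 0 < povmProb P (Matrix.vecMulVec φ (star φ)) i then
        povmProb P (Matrix.vecMulVec φ (star φ)) i *
          vN (povmPost P (Matrix.vecMulVec φ (star φ)) i) else 0 := by
    intro k P
    refine Finset.sum_nonneg fun i _ => ?_
    by_cases hp : 0 < povmProb P (Matrix.vecMulVec φ (star φ)) i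
    · rw [if_pos hp]
      exact mul_nonneg hp.le (vN_nonneg (post_psd P φ i hp) (post_trace_one P φ i hp))
    · rw [if_neg hp]
  have h_eS_zero : (∑ i, if 0 < povmProb (stdPOVM dA) (Matrix.vecMulVec φ (star φ)) i then
      povmProb (stdPOVM dA) (Matrix.vecMulVec φ (star φ)) i *
        vN (povmPost (stdPOVM dA) (Matrix.vecMulVec φ (star φ)) i) else 0) = 0 := by
    refine Finset.sum_eq_zero fun i _ => ?_
    by_cases hp : 0 < povmProb (stdPOVM dA) (Matrix.vecMulVec φ (star φ)) i
    · rw [if_pos hp]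
      have hpost : povmPost (stdPOVM dA) (Matrix.vecMulVec φ (star φ)) i =
          (povmProb (stdPOVM dA) (Matrix.vecMulVec φ (star φ)) i)⁻¹ •
            Matrix.vecMulVec (fun y => φ (i, y)) (star fun y => φ (i, y)) := by
        rw [povmPost, stdPOVM_ptrace]
      have hps : (∑ y, Complex.normSq (φ (i, y)))
          = povmProb (stdPOVM dA) (Matrix.vecMulVec φ (star φ)) i := by
        rw [povmProb_eq, stdPOVM_ptrace, trace_vecMulVec_star, Complex.ofReal_re]
      have hproj := proj_smul_vecMulVec (ψ := fun y => φ (i, y)) hp.ne' hps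
      have hherm := herm_smul_vecMulVec (fun y => φ (i, y))
        (povmProb (stdPOVM dA) (Matrix.vecMulVec φ (star φ)) i)
      rw [hpost, vN_of_proj hherm hproj, mul_zero]
    · rw [if_neg hp]
  have hJ : Jarrow (Matrix.vecMulVec φ (star φ)) = vN (ptraceA (Matrix.vecMulVec φ (star φ))) := by
    rw [Jarrow]
    exact iSup_iSup_eq hS0 (fun k P => sub_le_self _ (h_eS_nonneg k P))
      ⟨dA, stdPOVM dA, by rw [h_eS_zero, sub_zero]⟩
  have hT'0 : 0 ≤ -(((ptraceA (Matrix.vecMulVec φ (star φ))) * matLog γB).trace).re :=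
    neg_nonneg.mpr (trace_mul_matLog_re_nonpos hρB_psd hγBpd hγB.2)
  have hwork : ∀ (k : ℕ) (P : POVM (Fin k) (Fin dA)),
      workSum P (Matrix.vecMulVec φ (star φ)) γB =
        (-(((ptraceA (Matrix.vecMulVec φ (star φ))) * matLog γB).trace).re) -
          ∑ i, (if 0 < povmProb P (Matrix.vecMulVec φ (star φ)) i then
            povmProb P (Matrix.vecMulVec φ (star φ)) i *
              vN (povmPost P (Matrix.vecMulVec φ (star φ)) i) else 0) := by
    intro k P
    rw [workSum]
    have hterm : ∀ i, (if 0 < povmProb P (Matrix.vecMulVec φ (star φ)) i then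
        povmProb P (Matrix.vecMulVec φ (star φ)) i *
          relEnt (povmPost P (Matrix.vecMulVec φ (star φ)) i) γB else 0)
        = (-(if 0 < povmProb P (Matrix.vecMulVec φ (star φ)) i then
            povmProb P (Matrix.vecMulVec φ (star φ)) i *
              vN (povmPost P (Matrix.vecMulVec φ (star φ)) i) else 0))
          - (if 0 < povmProb P (Matrix.vecMulVec φ (star φ)) i then
            povmProb P (Matrix.vecMulVec φ (star φ)) i *
              (((povmPost P (Matrix.vecMulVec φ (star φ)) i * matLog γB).trace).re) else 0) := by
      intro i
      by_cases hp : 0 < povmProb P (Matrix.vecMulVec φ (star φ)) i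
      · simp only [if_pos hp, relEnt, vN]
        ring
      · simp only [if_neg hp]
        ring
    rw [Finset.sum_congr rfl fun i _ => hterm i, Finset.sum_sub_distrib,
      weighted_sum P φ (matLog γB), Finset.sum_neg_distrib]
    ring
  have hWa : Wa (Matrix.vecMulVec φ (star φ)) γB β =
      (1 / β) * (-(((ptraceA (Matrix.vecMulVec φ (star φ))) * matLog γB).trace).re) := by
    rw [Wa]
    refine iSup_iSup_eq (by positivity) (fun k P => ?_) ⟨dA, stdPOVM dA, ?_⟩
    · rw [hwork k P]
      exact mul_le_mul_of_nonneg_left (sub_le_self _ (h_eS_nonneg k P)) (by positivity)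
    · rw [hwork, h_eS_zero, sub_zero]
  refine ⟨hJ, ?_⟩
  rw [hWa]
  have hβne : β ≠ 0 := hβ.ne'
  rw [show β * (1 / β * (-(((ptraceA (Matrix.vecMulVec φ (star φ))) * matLog γB).trace).re))
    = -(((ptraceA (Matrix.vecMulVec φ (star φ))) * matLog γB).trace).re by
      rw [← mul_assoc, mul_one_div, div_self hβne, one_mul]]
  rw [relEnt, vN]
  ring


end AWD
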